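/- Let X be a prestreak and Y a streak. (1) There exists at most one map f : X → Y which preserves comparison with rationals on both sides, i.e., such that for all q ∈ ℚ and a ∈ X: q < a implies q < f(a), and a < q implies f(a) < q. (2) If moreover X is archimedean and f : X → Y preserves comparison with rationals on both sides, then f is a prestreak morphism (it preserves <, +, 0, 1, and products of positive elements). -/
import Mathlib


/-- A prestreak: a strict order (asymmetric and cotransitive) together with a
commutative additive monoid structure and a commutative multiplicative monoid
structure on the positive part, compatible with the order.  (The intrinsic
topology conditions of the paper are omitted, being vacuous in the classical
set-theoretic setting.) -/
structure Prestreak (X : Type*) where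
  lt : X → X → Prop
  add : X → X → X
  zero : X
  mul : X → X → X
  one : X
  lt_asymm : ∀ a b, ¬ (lt a b ∧ lt b a)
  lt_cotrans : ∀ a b x, lt a b → lt a x ∨ lt x b
  add_comm : ∀ a b, add a b = add b a
  add_assoc : ∀ a b c, add (add a b) c = add a (add b c)
  add_zero : ∀ a, add a zero = a
  zero_lt_one : lt zero one
  mul_pos : ∀ a b, lt zero a → lt zero b → lt zero (mul a b)
  mul_comm : ∀ a b, lt zero a → lt zero b → mul a b = mul b a
  mul_assoc : ∀ a b c, lt zero a → lt zero b → lt zero c →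
    mul (mul a b) c = mul a (mul b c)
  mul_one : ∀ a, lt zero a → mul a one = a
  mul_add : ∀ a b c, lt zero a → lt zero b → lt zero c →
    mul (add a b) c = add (mul a c) (mul b c)
  add_lt_add_iff : ∀ a b x, (lt (add a x) (add b x) ↔ lt a b)
  mul_lt_mul_iff : ∀ a b x, lt zero a → lt zero b → lt zero x →
    (lt (mul a x) (mul b x) ↔ lt a b)

namespace Prestreak

variable {X : Type*}

/-- Multiplication by a natural number: `0·a = 0`, `(n+1)·a = n·a + a`. -/
def nsmul (P : Prestreak X) : ℕ → X → X
  | 0, _ => P.zero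
  | n + 1, a => P.add (nsmul P n a) a

/-- The canonical image of a natural number, `n ↦ n·1`. -/
def ofNat (P : Prestreak X) (n : ℕ) : X := P.nsmul n P.one

/-- Comparison `x < q` of an element of a prestreak with a rational number,
using the canonical representation `q = (q.num⁺ − q.num⁻)/q.den`:
`x < (a−b)/c  :=  c·x + b < a`. -/
def ltQ (P : Prestreak X) (x : X) (q : ℚ) : Prop :=
  P.lt (P.add (P.nsmul q.den x) (P.ofNat ((-q.num).toNat))) (P.ofNat q.num.toNat)

/-- Comparison `q < x` of a rational with an element of a prestreak:
`(a−b)/c < x  :=  a < c·x + b`. -/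
def qLt (P : Prestreak X) (q : ℚ) (x : X) : Prop :=
  P.lt (P.ofNat q.num.toNat) (P.add (P.nsmul q.den x) (P.ofNat ((-q.num).toNat)))

/-- The archimedean property for prestreaks. -/
def Archimedean (P : Prestreak X) : Prop :=
  ∀ a b c d : X, P.lt b d →
    ∃ n : ℕ, P.lt (P.add a (P.nsmul n b)) (P.add c (P.nsmul n d))

/-- Tightness: antisymmetry of `≤` (where `a ≤ b := ¬ b < a`).
A streak is a tight archimedean prestreak. -/
def Tight (P : Prestreak X) : Prop :=
  ∀ a b : X, ¬ P.lt a b → ¬ P.lt b a → a = b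

/-- The apartness relation `a # b := a < b ∨ b < a`. -/
def Apart (P : Prestreak X) (a b : X) : Prop := P.lt a b ∨ P.lt b a

/-- A morphism of prestreaks: preserves `<`, `+`, `0`, `1` and products of
positive elements. -/
def IsHom {Y : Type*} (P : Prestreak X) (Q : Prestreak Y) (f : X → Y) : Prop :=
  (∀ a b, P.lt a b → Q.lt (f a) (f b)) ∧
  (∀ a b, f (P.add a b) = Q.add (f a) (f b)) ∧
  f P.zero = Q.zero ∧ f P.one = Q.one ∧
  (∀ a b, P.lt P.zero a → P.lt P.zero b → f (P.mul a b) = Q.mul (f a) (f b))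

/-- A multiplicative structure on a prestreak: a total multiplication which is
commutative, associative, distributes over addition, has unit `1`, restricts to
the given multiplication on positive elements, and satisfies the multiplicity
condition. -/
def IsMultiplicative (P : Prestreak X) (tmul : X → X → X) : Prop :=
  (∀ a b, tmul a b = tmul b a) ∧
  (∀ a b c, tmul (tmul a b) c = tmul a (tmul b c)) ∧
  (∀ a b c, tmul (P.add a b) c = P.add (tmul a c) (tmul b c)) ∧
  (∀ a, tmul a P.one = a) ∧
  (∀ a b, P.lt P.zero a → P.lt P.zero b → tmul a b = P.mul a b) ∧
  (∀ a b c d, P.lt b a → P.lt d c →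
    P.lt (P.add (tmul a d) (tmul b c)) (P.add (tmul a c) (tmul b d)))

variable (P : Prestreak X)

/-! ### Order basics -/

lemma irrefl (a : X) : ¬ P.lt a a := fun h => P.lt_asymm a a ⟨h, h⟩

lemma asymm {a b : X} (h : P.lt a b) : ¬ P.lt b a := fun h2 => P.lt_asymm a b ⟨h, h2⟩

lemma ltTrans {a b c : X} (h1 : P.lt a b) (h2 : P.lt b c) : P.lt a c := by
  rcases P.lt_cotrans a b c h1 with h | h
  · exact h
  · exact absurd h2 (P.asymm h)

/-- `a ≤ b` is expressed as `¬ P.lt b a`. -/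
lemma lt_of_lt_of_le {a b c : X} (h : P.lt a b) (h2 : ¬ P.lt c b) : P.lt a c :=
  (P.lt_cotrans a b c h).resolve_right h2

lemma lt_of_le_of_lt {a b c : X} (h : ¬ P.lt b a) (h2 : P.lt b c) : P.lt a c :=
  ((P.lt_cotrans b c a h2).resolve_left h)

lemma leTrans {a b c : X} (h : ¬ P.lt b a) (h2 : ¬ P.lt c b) : ¬ P.lt c a := by
  intro h3
  rcases P.lt_cotrans c a b h3 with h4 | h4
  · exact h2 h4
  · exact h h4

/-! ### Additive basics -/

lemma zero_add (a : X) : P.add P.zero a = a := by rw [P.add_comm]; exact P.add_zero a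

lemma add_lt_add_iff_left (a b x : X) :
    P.lt (P.add x a) (P.add x b) ↔ P.lt a b := by
  rw [P.add_comm x a, P.add_comm x b]; exact P.add_lt_add_iff a b x

lemma addLtAdd {a b c d : X} (h1 : P.lt a b) (h2 : P.lt c d) :
    P.lt (P.add a c) (P.add b d) :=
  P.ltTrans ((P.add_lt_add_iff a b c).2 h1) ((P.add_lt_add_iff_left c d b).2 h2)

lemma addLeAdd {a b c d : X} (h1 : ¬ P.lt b a) (h2 : ¬ P.lt d c) :
    ¬ P.lt (P.add b d) (P.add a c) := by
  intro h
  rcases P.lt_cotrans _ _ (P.add a d) h with h3 | h3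
  · exact h1 ((P.add_lt_add_iff b a d).1 h3)
  · exact h2 ((P.add_lt_add_iff_left d c a).1 h3)

lemma addLtAdd_of_lt_of_le {a b c d : X} (h1 : P.lt a b) (h2 : ¬ P.lt d c) :
    P.lt (P.add a c) (P.add b d) :=
  P.lt_of_lt_of_le ((P.add_lt_add_iff a b c).2 h1)
    (fun h => h2 ((P.add_lt_add_iff_left d c b).1 h))

lemma addPos {a b : X} (h1 : P.lt P.zero a) (h2 : P.lt P.zero b) :
    P.lt P.zero (P.add a b) := by
  have : P.lt (P.add a P.zero) (P.add a b) := (P.add_lt_add_iff_left _ _ _).2 h2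
  rw [P.add_zero] at this
  exact P.ltTrans h1 this

/-! ### Bridge to `AddCommMonoid` for equational reasoning -/

/-- The additive commutative monoid underlying a prestreak. -/
def acm (P : Prestreak X) : AddCommMonoid X where
  add := P.add
  zero := P.zero
  add_assoc := P.add_assoc
  zero_add := P.zero_add
  add_zero := P.add_zero
  add_comm := P.add_comm
  nsmul := fun n a => P.nsmul n a
  nsmul_zero := fun _ => rfl
  nsmul_succ := fun _ _ => rfl

lemma add_def (a b : X) : P.add a b = (letI := P.acm; a + b) := rfl
lemma zero_def : P.zero = (letI := P.acm; (0 : X)) := rfl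
lemma nsmul_def (n : ℕ) (a : X) : P.nsmul n a = (letI := P.acm; n • a) := rfl

/-! ### `nsmul` and `ofNat` -/

lemma nsmul_zero_elem (n : ℕ) : P.nsmul n P.zero = P.zero := by
  induction n with
  | zero => rfl
  | succ n ih => show P.add (P.nsmul n P.zero) P.zero = P.zero; rw [ih, P.add_zero]

lemma nsmul_one_smul (a : X) : P.nsmul 1 a = a := P.zero_add a

lemma nsmul_addm (n : ℕ) (a b : X) :
    P.nsmul n (P.add a b) = P.add (P.nsmul n a) (P.nsmul n b) := by
  letI := P.acm
  simp only [add_def, nsmul_def] at *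
  exact nsmul_add a b n

lemma nsmul_natadd (m n : ℕ) (a : X) :
    P.nsmul (m + n) a = P.add (P.nsmul m a) (P.nsmul n a) := by
  letI := P.acm
  simp only [add_def, nsmul_def] at *
  exact add_nsmul a m n

lemma nsmul_natmul (m n : ℕ) (a : X) :
    P.nsmul (m * n) a = P.nsmul m (P.nsmul n a) := by
  letI := P.acm
  simp only [add_def, nsmul_def] at *
  exact mul_nsmul' a m n

lemma ofNat_zero : P.ofNat 0 = P.zero := rfl
lemma ofNat_one : P.ofNat 1 = P.one := P.zero_add P.one

lemma ofNat_add (m n : ℕ) : P.ofNat (m + n) = P.add (P.ofNat m) (P.ofNat n) :=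
  P.nsmul_natadd m n P.one

lemma nsmul_ofNat (m n : ℕ) : P.nsmul m (P.ofNat n) = P.ofNat (m * n) :=
  (P.nsmul_natmul m n P.one).symm

lemma nsmulLt {a b : X} (h : P.lt a b) : ∀ {n : ℕ}, 0 < n →
    P.lt (P.nsmul n a) (P.nsmul n b) := by
  intro n hn
  induction n with
  | zero => omega
  | succ n ih =>
    rcases Nat.eq_zero_or_pos n with h0 | h0
    · subst h0; simpa [P.nsmul_one_smul] using h
    · exact P.addLtAdd (ih h0) h

lemma nsmul_lt_iff {a b : X} {n : ℕ} (hn : 0 < n) :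
    P.lt (P.nsmul n a) (P.nsmul n b) ↔ P.lt a b := by
  refine ⟨?_, fun h => P.nsmulLt h hn⟩
  induction n with
  | zero => omega
  | succ n ih =>
    intro h
    rcases Nat.eq_zero_or_pos n with h0 | h0
    · subst h0; simpa [P.nsmul_one_smul] using h
    · -- nsmul (n+1) a = nsmul n a + a < nsmul n b + b
      rcases P.lt_cotrans _ _ (P.add (P.nsmul n a) b) h with h1 | h1
      · exact (P.add_lt_add_iff_left a b _).1 h1
      · exact ih h0 ((P.add_lt_add_iff _ _ b).1 h1)

lemma nsmul_le_iff {a b : X} {n : ℕ} (hn : 0 < n) :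
    ¬ P.lt (P.nsmul n b) (P.nsmul n a) ↔ ¬ P.lt b a :=
  not_congr (P.nsmul_lt_iff hn)

lemma nsmulPos {a : X} {n : ℕ} (hn : 0 < n) (ha : P.lt P.zero a) :
    P.lt P.zero (P.nsmul n a) := by
  have := P.nsmulLt ha hn
  rwa [P.nsmul_zero_elem] at this

lemma ofNatLt {m n : ℕ} (h : m < n) : P.lt (P.ofNat m) (P.ofNat n) := by
  have : n = m + (n - m) := by omega
  rw [this, P.ofNat_add]
  have hpos : P.lt P.zero (P.ofNat (n - m)) :=
    P.nsmulPos (by omega) P.zero_lt_one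
  have := (P.add_lt_add_iff_left P.zero (P.ofNat (n - m)) (P.ofNat m)).2 hpos
  rwa [P.add_zero] at this

lemma ofNat_lt_iff {m n : ℕ} : P.lt (P.ofNat m) (P.ofNat n) ↔ m < n := by
  refine ⟨fun h => ?_, P.ofNatLt⟩
  by_contra hmn
  rcases Nat.lt_or_ge n m with h1 | h1
  · exact P.asymm h (P.ofNatLt h1)
  · have : m = n := by omega
    subst this; exact P.irrefl _ h
/-! ### Multiplication lemmas -/

lemma mul_lt_mul_iff_left {a b x : X} (ha : P.lt P.zero a) (hb : P.lt P.zero b)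
    (hx : P.lt P.zero x) : P.lt (P.mul x a) (P.mul x b) ↔ P.lt a b := by
  rw [P.mul_comm x a hx ha, P.mul_comm x b hx hb]
  exact P.mul_lt_mul_iff a b x ha hb hx

lemma mulLe {a b x : X} (ha : P.lt P.zero a) (hb : P.lt P.zero b)
    (hx : P.lt P.zero x) (h : ¬ P.lt b a) : ¬ P.lt (P.mul b x) (P.mul a x) :=
  fun h2 => h ((P.mul_lt_mul_iff b a x hb ha hx).1 h2)

lemma mul_ofNat {n : ℕ} (hn : 0 < n) {u : X} (hu : P.lt P.zero u) :
    P.mul (P.ofNat n) u = P.nsmul n u := by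
  induction n with
  | zero => omega
  | succ n ih =>
    rcases Nat.eq_zero_or_pos n with h0 | h0
    · subst h0
      rw [P.ofNat_one, P.mul_comm P.one u P.zero_lt_one hu, P.mul_one u hu,
        P.nsmul_one_smul]
    · have hofn : P.lt P.zero (P.ofNat n) := P.nsmulPos h0 P.zero_lt_one
      rw [show n + 1 = n + 1 from rfl, P.ofNat_add, P.ofNat_one,
        P.mul_add _ _ _ hofn P.zero_lt_one hu, ih h0,
        P.mul_comm P.one u P.zero_lt_one hu, P.mul_one u hu]
      rfl

lemma nsmul_mul_left {m : ℕ} (hm : 0 < m) {u v : X} (hu : P.lt P.zero u)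
    (hv : P.lt P.zero v) : P.mul (P.nsmul m u) v = P.nsmul m (P.mul u v) := by
  induction m with
  | zero => omega
  | succ m ih =>
    rcases Nat.eq_zero_or_pos m with h0 | h0
    · subst h0; rw [P.nsmul_one_smul, P.nsmul_one_smul]
    · have hmu : P.lt P.zero (P.nsmul m u) := P.nsmulPos h0 hu
      show P.mul (P.add (P.nsmul m u) u) v = P.add (P.nsmul m (P.mul u v)) (P.mul u v)
      rw [P.mul_add _ _ _ hmu hu hv, ih h0]

lemma nsmul_mul_nsmul {m n : ℕ} (hm : 0 < m) (hn : 0 < n) {u v : X}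
    (hu : P.lt P.zero u) (hv : P.lt P.zero v) :
    P.mul (P.nsmul m u) (P.nsmul n v) = P.nsmul (m * n) (P.mul u v) := by
  have hnv : P.lt P.zero (P.nsmul n v) := P.nsmulPos hn hv
  rw [P.nsmul_mul_left hm hu hnv,
    P.mul_comm u (P.nsmul n v) hu hnv, P.nsmul_mul_left hn hv hu,
    P.nsmul_natmul]
  congr 2
  exact P.mul_comm _ _ hv hu

lemma ofNat_mul_ofNat {m n : ℕ} (hm : 0 < m) (hn : 0 < n) :
    P.mul (P.ofNat m) (P.ofNat n) = P.ofNat (m * n) := by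
  have := P.nsmul_mul_nsmul hm hn P.zero_lt_one P.zero_lt_one
  rw [P.mul_one P.one P.zero_lt_one] at this
  exact this

lemma mul_add_nsmul {u v : X} (hu : P.lt P.zero u) (hv : P.lt P.zero v) (B : ℕ) :
    P.mul u (P.add v (P.ofNat B)) = P.add (P.mul u v) (P.nsmul B u) := by
  induction B with
  | zero =>
    show P.mul u (P.add v (P.ofNat 0)) = P.add (P.mul u v) P.zero
    rw [P.ofNat_zero, P.add_zero, P.add_zero]
  | succ B ih =>
    have hw : P.lt P.zero (P.add v (P.ofNat B)) := by
      refine P.lt_of_lt_of_le hv ?_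
      intro h
      have h2 := (P.add_lt_add_iff_left (P.ofNat B) P.zero v).1 (by rwa [P.add_zero])
      rw [← P.ofNat_zero] at h2
      exact (P.ofNat_lt_iff.1 h2).not_ge (Nat.zero_le B)
    rw [P.ofNat_add, P.ofNat_one, ← P.add_assoc,
      P.mul_comm u _ hu (by
        refine P.ltTrans hw ?_
        have := (P.add_lt_add_iff_left P.zero P.one (P.add v (P.ofNat B))).2 P.zero_lt_one
        rwa [P.add_zero] at this),
      P.mul_add _ _ _ hw P.zero_lt_one hu,
      P.mul_comm _ u hw hu, ih, P.mul_comm P.one u P.zero_lt_one hu, P.mul_one u hu,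
      P.add_assoc]
    rfl
/-! ### The rational comparison layer -/

/-- `Rlt' a b c x` means `(a-b)/c < x`. -/
def Rlt' (P : Prestreak X) (a b c : ℕ) (x : X) : Prop :=
  P.lt (P.ofNat a) (P.add (P.nsmul c x) (P.ofNat b))

/-- `Rgt' a b c x` means `x < (a-b)/c`. -/
def Rgt' (P : Prestreak X) (a b c : ℕ) (x : X) : Prop :=
  P.lt (P.add (P.nsmul c x) (P.ofNat b)) (P.ofNat a)

lemma qLt_def (q : ℚ) (x : X) :
    P.qLt q x = P.Rlt' q.num.toNat (-q.num).toNat q.den x := rfl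

lemma ltQ_def (q : ℚ) (x : X) :
    P.ltQ x q = P.Rgt' q.num.toNat (-q.num).toNat q.den x := rfl

lemma rlt_scale {a b c : ℕ} {x : X} {k : ℕ} (hk : 0 < k) :
    P.Rlt' a b c x ↔ P.Rlt' (k * a) (k * b) (k * c) x := by
  unfold Rlt'
  rw [← P.nsmul_lt_iff (a := P.ofNat a) (b := P.add (P.nsmul c x) (P.ofNat b)) hk,
    P.nsmul_addm, P.nsmul_ofNat, P.nsmul_ofNat, ← P.nsmul_natmul]

lemma rgt_scale {a b c : ℕ} {x : X} {k : ℕ} (hk : 0 < k) :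
    P.Rgt' a b c x ↔ P.Rgt' (k * a) (k * b) (k * c) x := by
  unfold Rgt'
  rw [← P.nsmul_lt_iff (b := P.ofNat a) (a := P.add (P.nsmul c x) (P.ofNat b)) hk,
    P.nsmul_addm, P.nsmul_ofNat, P.nsmul_ofNat, ← P.nsmul_natmul]

lemma rlt_addcancel {a b c : ℕ} {x : X} (e : ℕ) :
    P.Rlt' a b c x ↔ P.Rlt' (a + e) (b + e) c x := by
  unfold Rlt'
  rw [P.ofNat_add, P.ofNat_add, ← P.add_assoc]
  exact (P.add_lt_add_iff _ _ _).symm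

lemma rgt_addcancel {a b c : ℕ} {x : X} (e : ℕ) :
    P.Rgt' a b c x ↔ P.Rgt' (a + e) (b + e) c x := by
  unfold Rgt'
  rw [P.ofNat_add, P.ofNat_add, ← P.add_assoc]
  exact (P.add_lt_add_iff _ _ _).symm

lemma rlt_irrelevant {a b c a' b' c' : ℕ} {x : X} (hc : 0 < c) (hc' : 0 < c')
    (h : a * c' + b' * c = a' * c + b * c') :
    P.Rlt' a b c x ↔ P.Rlt' a' b' c' x := by
  have L : P.Rlt' a b c x ↔ P.Rlt' (c' * a + c * b') (c' * b + c * b') (c' * c) x :=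
    (P.rlt_scale hc').trans (P.rlt_addcancel _)
  have R : P.Rlt' a' b' c' x ↔ P.Rlt' (c * a' + c' * b) (c * b' + c' * b) (c * c') x :=
    (P.rlt_scale hc).trans (P.rlt_addcancel _)
  rw [L, R]
  have e1 : c' * a + c * b' = c * a' + c' * b := by nlinarith [h]
  have e2 : c' * b + c * b' = c * b' + c' * b := by ring
  have e3 : c' * c = c * c' := by ring
  rw [e1, e2, e3]

lemma rgt_irrelevant {a b c a' b' c' : ℕ} {x : X} (hc : 0 < c) (hc' : 0 < c')
    (h : a * c' + b' * c = a' * c + b * c') :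
    P.Rgt' a b c x ↔ P.Rgt' a' b' c' x := by
  have L : P.Rgt' a b c x ↔ P.Rgt' (c' * a + c * b') (c' * b + c * b') (c' * c) x :=
    (P.rgt_scale hc').trans (P.rgt_addcancel _)
  have R : P.Rgt' a' b' c' x ↔ P.Rgt' (c * a' + c' * b) (c * b' + c' * b) (c * c') x :=
    (P.rgt_scale hc).trans (P.rgt_addcancel _)
  rw [L, R]
  have e1 : c' * a + c * b' = c * a' + c' * b := by nlinarith [h]
  have e2 : c' * b + c * b' = c * b' + c' * b := by ring
  have e3 : c' * c = c * c' := by ring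
  rw [e1, e2, e3]

/-- `(a - b)/c` is a representation of the rational `q`. -/
def RatRepr (q : ℚ) (a b c : ℕ) : Prop :=
  0 < c ∧ ((a : ℤ) - b) * q.den = q.num * c

lemma ratRepr_self (q : ℚ) : RatRepr q q.num.toNat (-q.num).toNat q.den := by
  refine ⟨q.den_pos , ?_⟩
  have h3 : (q.num.toNat : ℤ) - (-q.num).toNat = q.num := by omega
  rw [h3]

lemma qLt_iff_repr {q : ℚ} {a b c : ℕ} (h : RatRepr q a b c) (x : X) :
    P.qLt q x ↔ P.Rlt' a b c x := by
  rw [P.qLt_def]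
  refine P.rlt_irrelevant q.den_pos h.1 ?_
  have h2 := h.2
  have h3 : (q.num.toNat : ℤ) - (-q.num).toNat = q.num := by omega
  have : ((q.num.toNat : ℤ)) * c + b * q.den = a * q.den + ((-q.num).toNat : ℤ) * c := by
    nlinarith [h2, h3]
  exact_mod_cast this

lemma ltQ_iff_repr {q : ℚ} {a b c : ℕ} (h : RatRepr q a b c) (x : X) :
    P.ltQ x q ↔ P.Rgt' a b c x := by
  rw [P.ltQ_def]
  refine P.rgt_irrelevant q.den_pos h.1 ?_
  have h2 := h.2
  have h3 : (q.num.toNat : ℤ) - (-q.num).toNat = q.num := by omega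
  have : ((q.num.toNat : ℤ)) * c + b * q.den = a * q.den + ((-q.num).toNat : ℤ) * c := by
    nlinarith [h2, h3]
  exact_mod_cast this

lemma ratRepr_eq_div {q : ℚ} {a b c : ℕ} (h : RatRepr q a b c) :
    q = ((a : ℚ) - b) / c := by
  obtain ⟨hc, e⟩ := h
  have e' : ((a : ℚ) - b) * q.den = q.num * c := by exact_mod_cast e
  have hden : (q.den : ℚ) ≠ 0 := by exact_mod_cast q.den_nz
  have hc' : (c : ℚ) ≠ 0 := by positivity
  rw [eq_div_iff hc']
  have hnum : (q.num : ℚ) = q * q.den := (Rat.mul_den_eq_num q).symm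
  have h2 : ((a : ℚ) - b) * q.den = (q * c) * q.den := by
    rw [e', hnum]; ring
  exact (mul_right_cancel₀ hden h2).symm

lemma ratRepr_of_eq_div {q : ℚ} {a b c : ℕ} (hc : 0 < c)
    (h : q = ((a : ℚ) - b) / c) : RatRepr q a b c := by
  refine ⟨hc, ?_⟩
  have hden : (q.den : ℚ) ≠ 0 := by exact_mod_cast q.den_nz
  have hc' : (c : ℚ) ≠ 0 := by positivity
  have h1 : (q.num : ℚ) / q.den = ((a : ℚ) - b) / c := by
    rw [Rat.num_div_den]; exact h
  rw [div_eq_div_iff hden hc'] at h1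
  have : (((a : ℤ) - b) * q.den : ℚ) = ((q.num * c : ℤ) : ℚ) := by push_cast; linarith
  exact_mod_cast this

/-- Cross-multiplied comparison of two represented rationals. -/
lemma ratRepr_lt_iff {q r : ℚ} {a b c a' b' c' : ℕ} (h1 : RatRepr q a b c)
    (h2 : RatRepr r a' b' c') :
    q < r ↔ a * c' + b' * c < a' * c + b * c' := by
  have hc : (0:ℚ) < c := by exact_mod_cast h1.1
  have hc' : (0:ℚ) < c' := by exact_mod_cast h2.1
  rw [ratRepr_eq_div h1, ratRepr_eq_div h2, div_lt_div_iff₀ hc hc']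
  constructor
  · intro h
    have : ((a * c' + b' * c : ℕ) : ℚ) < ((a' * c + b * c' : ℕ) : ℚ) := by
      push_cast; nlinarith [h]
    exact_mod_cast this
  · intro h
    have : ((a * c' + b' * c : ℕ) : ℚ) < ((a' * c + b * c' : ℕ) : ℚ) := by
      exact_mod_cast h
    push_cast at this; nlinarith [this]

lemma ratRepr_le_iff {q r : ℚ} {a b c a' b' c' : ℕ} (h1 : RatRepr q a b c)
    (h2 : RatRepr r a' b' c') :
    q ≤ r ↔ a * c' + b' * c ≤ a' * c + b * c' := by
  have hc : (0:ℚ) < c := by exact_mod_cast h1.1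
  have hc' : (0:ℚ) < c' := by exact_mod_cast h2.1
  rw [ratRepr_eq_div h1, ratRepr_eq_div h2, div_le_div_iff₀ hc hc']
  constructor
  · intro h
    have : ((a * c' + b' * c : ℕ) : ℚ) ≤ ((a' * c + b * c' : ℕ) : ℚ) := by
      push_cast; nlinarith [h]
    exact_mod_cast this
  · intro h
    have : ((a * c' + b' * c : ℕ) : ℚ) ≤ ((a' * c + b * c' : ℕ) : ℚ) := by
      exact_mod_cast h
    push_cast at this; nlinarith [this]
/-! ### Mixed comparisons -/

lemma lt_of_ltQ_qLt {u v : X} {q : ℚ} (h1 : P.ltQ u q) (h2 : P.qLt q v) :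
    P.lt u v := by
  rw [P.ltQ_def] at h1
  rw [P.qLt_def] at h2
  simp only [Rlt', Rgt'] at h1 h2
  have h3 := P.ltTrans h1 h2
  exact (P.nsmul_lt_iff q.den_pos).1 ((P.add_lt_add_iff _ _ _).1 h3)

lemma ltQ_qLt_absurd {u : X} {q : ℚ} (h1 : P.ltQ u q) (h2 : P.qLt q u) : False :=
  P.asymm h2 h1

lemma rlt_rgt {a b c a' b' c' : ℕ} {x : X} (hc : 0 < c) (hc' : 0 < c')
    (h1 : P.Rlt' a b c x) (h2 : P.Rgt' a' b' c' x) :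
    a * c' + b' * c < a' * c + b * c' := by
  rw [P.rlt_scale hc'] at h1
  rw [P.rgt_scale hc] at h2
  simp only [Rlt', Rgt'] at h1 h2
  have key := P.addLtAdd h1 h2
  have eL : P.add (P.ofNat (c' * a)) (P.add (P.nsmul (c * c') x) (P.ofNat (c * b'))) =
      P.add (P.nsmul (c * c') x) (P.ofNat (c' * a + c * b')) := by
    rw [P.ofNat_add]
    letI := P.acm; simp only [P.add_def, P.nsmul_def]; abel
  have eR : P.add (P.add (P.nsmul (c' * c) x) (P.ofNat (c' * b))) (P.ofNat (c * a')) =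
      P.add (P.nsmul (c * c') x) (P.ofNat (c * a' + c' * b)) := by
    rw [P.ofNat_add, Nat.mul_comm c' c]
    letI := P.acm; simp only [P.add_def, P.nsmul_def]; abel
  rw [eL, eR] at key
  have h4 := P.ofNat_lt_iff.1 ((P.add_lt_add_iff_left _ _ _).1 key)
  nlinarith [h4]

/-- `q < x ≤ (a'-b')/c'` implies `q < (a'-b')/c'`. -/
lemma qLt_between {q r : ℚ} {x : X} (h1 : P.qLt q x) (h2 : P.ltQ x r) : q < r := by
  rw [P.qLt_def] at h1
  rw [P.ltQ_def] at h2
  rw [ratRepr_lt_iff (ratRepr_self q) (ratRepr_self r)]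
  exact P.rlt_rgt q.den_pos r.den_pos h1 h2

lemma rlt_of_le {a b c a' b' c' : ℕ} {x : X} (hc : 0 < c) (hc' : 0 < c')
    (hle : a * c' + b' * c ≤ a' * c + b * c') (h : P.Rlt' a' b' c' x) :
    P.Rlt' a b c x := by
  rw [P.rlt_scale hc] at h
  rw [P.rlt_scale hc']
  unfold Rlt' at h ⊢
  have step : P.lt (P.add (P.ofNat (c * a')) (P.ofNat (c' * b)))
      (P.add (P.add (P.nsmul (c * c') x) (P.ofNat (c * b'))) (P.ofNat (c' * b))) :=
    (P.add_lt_add_iff _ _ _).2 h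
  have hle2 : ¬ P.lt (P.ofNat (c * a' + c' * b)) (P.ofNat (c' * a + c * b')) := by
    rw [P.ofNat_lt_iff]
    intro h5
    nlinarith [h5, hle]
  have eR : P.add (P.add (P.nsmul (c * c') x) (P.ofNat (c * b'))) (P.ofNat (c' * b)) =
      P.add (P.add (P.nsmul (c * c') x) (P.ofNat (c' * b))) (P.ofNat (c * b')) := by
    letI := P.acm; simp only [P.add_def, P.nsmul_def]; abel
  rw [eR, ← P.ofNat_add] at step
  have final := P.lt_of_le_of_lt hle2 step
  -- final : ofNat (c'*a + c*b') < ((c*c')x + c'*b) + c*b'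
  rw [P.ofNat_add] at final
  have := (P.add_lt_add_iff _ _ _).1 final
  rwa [Nat.mul_comm c c'] at this

lemma rgt_of_le {a b c a' b' c' : ℕ} {x : X} (hc : 0 < c) (hc' : 0 < c')
    (hle : a * c' + b' * c ≤ a' * c + b * c') (h : P.Rgt' a b c x) :
    P.Rgt' a' b' c' x := by
  rw [P.rgt_scale hc'] at h
  rw [P.rgt_scale hc]
  unfold Rgt' at h ⊢
  have step : P.lt (P.add (P.add (P.nsmul (c' * c) x) (P.ofNat (c' * b))) (P.ofNat (c * b')))
      (P.add (P.ofNat (c' * a)) (P.ofNat (c * b'))) :=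
    (P.add_lt_add_iff _ _ _).2 h
  have hle2 : ¬ P.lt (P.ofNat (c * a' + c' * b)) (P.ofNat (c' * a + c * b')) := by
    rw [P.ofNat_lt_iff]
    intro h5
    nlinarith [h5, hle]
  have eL : P.add (P.add (P.nsmul (c' * c) x) (P.ofNat (c' * b))) (P.ofNat (c * b')) =
      P.add (P.add (P.nsmul (c * c') x) (P.ofNat (c * b'))) (P.ofNat (c' * b)) := by
    rw [Nat.mul_comm c' c]
    letI := P.acm; simp only [P.add_def, P.nsmul_def]; abel
  rw [eL, ← P.ofNat_add] at step
  have final := P.lt_of_lt_of_le step hle2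
  -- final : ((c*c')x + c*b') + c'*b < ofNat (c*a' + c'*b)
  rw [P.ofNat_add] at final
  exact (P.add_lt_add_iff _ _ _).1 final

lemma qLt_mono {q q' : ℚ} {x : X} (h : q ≤ q') (h2 : P.qLt q' x) : P.qLt q x := by
  rw [P.qLt_def] at h2 ⊢
  exact P.rlt_of_le q.den_pos q'.den_pos
    ((ratRepr_le_iff (ratRepr_self q) (ratRepr_self q')).1 h) h2
lemma ltQ_mono {q q' : ℚ} {x : X} (h : q ≤ q') (h2 : P.ltQ x q) : P.ltQ x q' := by
  rw [P.ltQ_def] at h2 ⊢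
  exact P.rgt_of_le q.den_pos q'.den_pos
    ((ratRepr_le_iff (ratRepr_self q) (ratRepr_self q')).1 h) h2

/-- Cotransitivity across a pair of rationals. -/
lemma cotransQ {q r : ℚ} (h : q < r) (x : X) : P.qLt q x ∨ P.ltQ x r := by
  rw [P.qLt_def, P.ltQ_def]
  set a := q.num.toNat; set b := (-q.num).toNat; set c := q.den
  set a' := r.num.toNat; set b' := (-r.num).toNat; set c' := r.den
  have hc : 0 < c := q.den_pos
  have hc' : 0 < c' := r.den_pos
  have hcross : a * c' + b' * c < a' * c + b * c' :=
    (ratRepr_lt_iff (ratRepr_self q) (ratRepr_self r)).1 h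
  have hN : P.lt (P.ofNat (c' * a + c * b')) (P.ofNat (c * a' + c' * b)) := by
    rw [P.ofNat_lt_iff]; nlinarith [hcross]
  rcases P.lt_cotrans _ _
    (P.add (P.add (P.nsmul (c * c') x) (P.ofNat (c' * b))) (P.ofNat (c * b'))) hN
    with h1 | h1
  · left
    rw [P.rlt_scale hc']
    unfold Rlt'
    rw [P.ofNat_add] at h1
    have e : P.add (P.add (P.nsmul (c * c') x) (P.ofNat (c' * b))) (P.ofNat (c * b')) =
        P.add (P.add (P.nsmul (c' * c) x) (P.ofNat (c' * b))) (P.ofNat (c * b')) := by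
      rw [Nat.mul_comm c c']
    rw [e] at h1
    exact (P.add_lt_add_iff _ _ _).1 h1
  · right
    rw [P.rgt_scale hc]
    unfold Rgt'
    rw [P.ofNat_add] at h1
    have e : P.add (P.add (P.nsmul (c * c') x) (P.ofNat (c' * b))) (P.ofNat (c * b')) =
        P.add (P.add (P.nsmul (c * c') x) (P.ofNat (c * b'))) (P.ofNat (c' * b)) := by
      letI := P.acm; simp only [P.add_def, P.nsmul_def]; abel
    rw [e] at h1
    exact (P.add_lt_add_iff _ _ _).1 h1

/-! ### Special values -/

lemma qLt_zero_iff {q : ℚ} : P.qLt q P.zero ↔ q < 0 := by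
  rw [P.qLt_def]
  unfold Rlt'
  rw [P.nsmul_zero_elem, P.zero_add, P.ofNat_lt_iff]
  constructor
  · intro h; have : q.num < 0 := by omega
    exact Rat.num_neg.mp this
  · intro h; have : q.num < 0 := Rat.num_neg.mpr h
    omega

lemma ltQ_zero_iff {q : ℚ} : P.ltQ P.zero q ↔ 0 < q := by
  rw [P.ltQ_def]
  unfold Rgt'
  rw [P.nsmul_zero_elem, P.zero_add, P.ofNat_lt_iff]
  constructor
  · intro h; have : 0 < q.num := by omega
    exact Rat.num_pos.mp this
  · intro h; have : 0 < q.num := Rat.num_pos.mpr h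
    omega

lemma qLt_zero_x {x : X} : P.qLt 0 x ↔ P.lt P.zero x := by
  rw [P.qLt_iff_repr (ratRepr_of_eq_div (a := 0) (b := 0) (c := 1) one_pos (by norm_num))]
  unfold Rlt'
  rw [P.ofNat_zero, P.add_zero, P.nsmul_one_smul]

lemma ltQ_x_zero {x : X} : P.ltQ x 0 ↔ P.lt x P.zero := by
  rw [P.ltQ_iff_repr (ratRepr_of_eq_div (a := 0) (b := 0) (c := 1) one_pos (by norm_num))]
  unfold Rgt'
  rw [P.ofNat_zero, P.add_zero, P.nsmul_one_smul]

lemma qLt_nat {n : ℕ} {x : X} : P.qLt (n : ℚ) x ↔ P.lt (P.ofNat n) x := by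
  rw [P.qLt_iff_repr (ratRepr_of_eq_div (a := n) (b := 0) (c := 1) one_pos (by norm_num))]
  unfold Rlt'
  rw [P.ofNat_zero, P.add_zero, P.nsmul_one_smul]

lemma ltQ_nat {n : ℕ} {x : X} : P.ltQ x (n : ℚ) ↔ P.lt x (P.ofNat n) := by
  rw [P.ltQ_iff_repr (ratRepr_of_eq_div (a := n) (b := 0) (c := 1) one_pos (by norm_num))]
  unfold Rgt'
  rw [P.ofNat_zero, P.add_zero, P.nsmul_one_smul]

lemma qLt_neg_nat {m : ℕ} {x : X} :
    P.qLt (-(m : ℚ)) x ↔ P.lt P.zero (P.add x (P.ofNat m)) := by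
  rw [P.qLt_iff_repr (ratRepr_of_eq_div (a := 0) (b := m) (c := 1) one_pos (by norm_num))]
  unfold Rlt'
  rw [P.ofNat_zero, P.nsmul_one_smul]

/-! ### Archimedean consequences -/

lemma exists_upper (hA : P.Archimedean) (x : X) : ∃ n : ℕ, P.ltQ x (n : ℚ) := by
  obtain ⟨n, hn⟩ := hA x P.zero P.zero P.one P.zero_lt_one
  refine ⟨n, ?_⟩
  rw [P.ltQ_nat]
  rwa [P.nsmul_zero_elem, P.add_zero, P.zero_add] at hn

lemma exists_lower (hA : P.Archimedean) (x : X) : ∃ m : ℕ, P.qLt (-(m : ℚ)) x := by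
  obtain ⟨m, hm⟩ := hA P.zero P.zero x P.one P.zero_lt_one
  refine ⟨m, ?_⟩
  rw [P.qLt_neg_nat]
  rwa [P.nsmul_zero_elem, P.add_zero] at hm
/-- Density: between two separated elements of an archimedean prestreak
there is a pair of rationals. -/
lemma density (hA : P.Archimedean) {u v : X} (h : P.lt u v) :
    ∃ q r : ℚ, q < r ∧ P.ltQ u q ∧ P.qLt r v := by
  classical
  obtain ⟨m, hm⟩ := P.exists_lower hA u
  rw [P.qLt_neg_nat] at hm
  set w := P.add u (P.ofNat m) with hw
  set w' := P.add v (P.ofNat m) with hw'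
  obtain ⟨n, hn⟩ := hA (P.ofNat 2) u P.zero v h
  have hnpos : 0 < n := by
    rcases Nat.eq_zero_or_pos n with h0 | h0
    · exfalso
      subst h0
      simp only [Prestreak.nsmul] at hn
      rw [P.add_zero, P.add_zero] at hn
      rw [← P.ofNat_zero, P.ofNat_lt_iff] at hn
      omega
    · exact h0
  have h2 : P.lt (P.add (P.nsmul n w) (P.ofNat 2)) (P.nsmul n w') := by
    rw [P.zero_add] at hn
    have step := (P.add_lt_add_iff _ _ (P.ofNat (n * m))).2 hn
    have eL : P.add (P.add (P.ofNat 2) (P.nsmul n u)) (P.ofNat (n * m)) =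
        P.add (P.nsmul n w) (P.ofNat 2) := by
      rw [hw, P.nsmul_addm, P.nsmul_ofNat]
      letI := P.acm; simp only [P.add_def, P.nsmul_def]; abel
    have eR : P.add (P.nsmul n v) (P.ofNat (n * m)) = P.nsmul n w' := by
      rw [hw', P.nsmul_addm, P.nsmul_ofNat]
    rwa [eL, eR] at step
  have h0w : P.lt P.zero (P.nsmul n w) := P.nsmulPos hnpos hm
  obtain ⟨K, hK⟩ := P.exists_upper hA (P.nsmul n w)
  rw [P.ltQ_nat] at hK
  have hex : ∃ k, P.lt (P.nsmul n w) (P.ofNat (k + 1)) :=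
    ⟨K, P.ltTrans hK (P.ofNatLt (by omega))⟩
  set k0 := Nat.find hex with hk0
  have hfind : P.lt (P.nsmul n w) (P.ofNat (k0 + 1)) := Nat.find_spec hex
  have hlow : ¬ P.lt (P.nsmul n w) (P.ofNat k0) := by
    rcases Nat.eq_zero_or_pos k0 with h0 | h0
    · rw [h0, P.ofNat_zero]
      exact P.asymm h0w
    · have := Nat.find_min hex (m := k0 - 1) (by omega)
      have e : k0 - 1 + 1 = k0 := by omega
      rwa [e] at this
  refine ⟨((k0 : ℚ) + 1 - m * n) / n, ((k0 : ℚ) + 2 - m * n) / n, ?_, ?_, ?_⟩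
  · have hnq : (0 : ℚ) < n := by exact_mod_cast hnpos
    rw [div_lt_div_iff_of_pos_right hnq]
    linarith
  · rw [P.ltQ_iff_repr (ratRepr_of_eq_div (a := k0 + 1) (b := m * n) (c := n) hnpos
      (by push_cast; ring))]
    unfold Rgt'
    have e : P.add (P.nsmul n u) (P.ofNat (m * n)) = P.nsmul n w := by
      rw [hw, P.nsmul_addm, P.nsmul_ofNat, Nat.mul_comm m n]
    rw [e]
    exact hfind
  · rw [P.qLt_iff_repr (ratRepr_of_eq_div (a := k0 + 2) (b := m * n) (c := n) hnpos
      (by push_cast; ring))]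
    unfold Rlt'
    have e : P.add (P.nsmul n v) (P.ofNat (m * n)) = P.nsmul n w' := by
      rw [hw', P.nsmul_addm, P.nsmul_ofNat, Nat.mul_comm m n]
    rw [e]
    have e2 : P.ofNat (k0 + 2) = P.add (P.ofNat k0) (P.ofNat 2) := P.ofNat_add k0 2
    rw [e2]
    exact P.lt_of_le_of_lt (P.addLeAdd hlow (P.irrefl (P.ofNat 2))) h2
lemma qLt_one_iff {q : ℚ} : P.qLt q P.one ↔ q < 1 := by
  rw [P.qLt_def]
  unfold Rlt'
  have e : P.nsmul q.den P.one = P.ofNat q.den := rfl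
  rw [e, ← P.ofNat_add, P.ofNat_lt_iff,
    ratRepr_lt_iff (ratRepr_self q)
      (ratRepr_of_eq_div (a := 1) (b := 0) (c := 1) one_pos (by norm_num))]
  omega

lemma ltQ_one_iff {q : ℚ} : P.ltQ P.one q ↔ 1 < q := by
  rw [P.ltQ_def]
  unfold Rgt'
  have e : P.nsmul q.den P.one = P.ofNat q.den := rfl
  rw [e, ← P.ofNat_add, P.ofNat_lt_iff,
    ratRepr_lt_iff
      (ratRepr_of_eq_div (a := 1) (b := 0) (c := 1) one_pos (by norm_num))
      (ratRepr_self q)]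
  omega

end Prestreak

section Transfer

variable {Z W : Type*} (PZ : Prestreak Z) (QW : Prestreak W)

/-- Main wrapper: if `f` preserves rational bounds, and the rational cuts of
`c : Z` transfer to the rational cuts of `w : W`, then `f c = w`. -/
lemma Prestreak.eq_of_cuts (hQA : QW.Archimedean) (hQT : QW.Tight) (f : Z → W)
    (hf1 : ∀ (q : ℚ) (a : Z), PZ.qLt q a → QW.qLt q (f a))
    (hf2 : ∀ (q : ℚ) (a : Z), PZ.ltQ a q → QW.ltQ (f a) q)
    (c : Z) (w : W)
    (H1 : ∀ q : ℚ, PZ.qLt q c → QW.qLt q w)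
    (H2 : ∀ q : ℚ, PZ.ltQ c q → QW.ltQ w q) :
    f c = w := by
  refine hQT _ _ (fun hlt => ?_) (fun hlt => ?_)
  · obtain ⟨q, r, hqr, h1, h2⟩ := QW.density hQA hlt
    rcases PZ.cotransQ hqr c with h3 | h3
    · exact QW.ltQ_qLt_absurd h1 (hf1 q c h3)
    · exact QW.ltQ_qLt_absurd (H2 r h3) h2
  · obtain ⟨q, r, hqr, h1, h2⟩ := QW.density hQA hlt
    rcases PZ.cotransQ hqr c with h3 | h3
    · exact QW.ltQ_qLt_absurd h1 (H1 q h3)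
    · exact QW.ltQ_qLt_absurd (hf2 r c h3) h2

end Transfer

namespace Prestreak
variable (P : Prestreak X)
lemma ltQ_ofNat {n : ℕ} {ρ : ℚ} : P.ltQ (P.ofNat n) ρ ↔ (n : ℚ) < ρ := by
  rw [P.ltQ_def]
  unfold Rgt'
  rw [P.nsmul_ofNat, ← P.ofNat_add, P.ofNat_lt_iff,
    ratRepr_lt_iff (ratRepr_of_eq_div (a := n) (b := 0) (c := 1) one_pos (by norm_num))
      (ratRepr_self ρ)]
  rw [Nat.mul_comm ρ.den n]
  omega

lemma qLt_ofNat {n : ℕ} {ρ : ℚ} : P.qLt ρ (P.ofNat n) ↔ ρ < (n : ℚ) := by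
  rw [P.qLt_def]
  unfold Rlt'
  rw [P.nsmul_ofNat, ← P.ofNat_add, P.ofNat_lt_iff,
    ratRepr_lt_iff (ratRepr_self ρ)
      (ratRepr_of_eq_div (a := n) (b := 0) (c := 1) one_pos (by norm_num))]
  rw [Nat.mul_comm ρ.den n]
  omega

lemma num_sub_eq (σ : ℚ) : (σ.num.toNat : ℚ) - ((-σ.num).toNat : ℚ) = (σ.num : ℚ) := by
  have : (σ.num.toNat : ℤ) - ((-σ.num).toNat : ℤ) = σ.num := by omega
  exact_mod_cast this

lemma repr_unscale (σ : ℚ) {B C : ℕ} (hC : 0 < C) :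
    RatRepr ((σ - B) / C) σ.num.toNat (σ.den * B + (-σ.num).toNat) (σ.den * C) := by
  refine ratRepr_of_eq_div (by positivity) ?_
  have h6 : σ * σ.den = (σ.num.toNat : ℚ) - ((-σ.num).toNat : ℚ) := by
    rw [num_sub_eq]; exact Rat.mul_den_eq_num σ
  rw [div_eq_div_iff (by positivity) (by positivity)]
  push_cast
  linear_combination (C : ℚ) * h6

lemma qLt_unscale {σ : ℚ} {x : X} {B C : ℕ} (hC : 0 < C)
    (h : P.qLt σ (P.add (P.nsmul C x) (P.ofNat B))) : P.qLt ((σ - B) / C) x := by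
  rw [P.qLt_def] at h
  unfold Rlt' at h
  rw [P.qLt_iff_repr (repr_unscale σ hC)]
  unfold Rlt'
  have e : P.add (P.nsmul σ.den (P.add (P.nsmul C x) (P.ofNat B)))
        (P.ofNat (-σ.num).toNat) =
      P.add (P.nsmul (σ.den * C) x) (P.ofNat (σ.den * B + (-σ.num).toNat)) := by
    rw [P.nsmul_addm, P.nsmul_ofNat, ← P.nsmul_natmul, P.ofNat_add]
    letI := P.acm; simp only [P.add_def, P.nsmul_def]; abel
  rw [e] at h
  exact h

lemma ltQ_unscale {σ : ℚ} {x : X} {B C : ℕ} (hC : 0 < C)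
    (h : P.ltQ (P.add (P.nsmul C x) (P.ofNat B)) σ) : P.ltQ x ((σ - B) / C) := by
  rw [P.ltQ_def] at h
  unfold Rgt' at h
  rw [P.ltQ_iff_repr (repr_unscale σ hC)]
  unfold Rgt'
  have e : P.add (P.nsmul σ.den (P.add (P.nsmul C x) (P.ofNat B)))
        (P.ofNat (-σ.num).toNat) =
      P.add (P.nsmul (σ.den * C) x) (P.ofNat (σ.den * B + (-σ.num).toNat)) := by
    rw [P.nsmul_addm, P.nsmul_ofNat, ← P.nsmul_natmul, P.ofNat_add]
    letI := P.acm; simp only [P.add_def, P.nsmul_def]; abel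
  rw [e] at h
  exact h

lemma le_nat_of_repr {q : ℚ} : q ≤ (q.num.toNat : ℚ) := by
  rw [ratRepr_le_iff (ratRepr_self q)
    (ratRepr_of_eq_div (a := q.num.toNat) (b := 0) (c := 1) one_pos (by norm_num))]
  have := q.den_pos
  nlinarith [this]

lemma qLt_refine (hA : P.Archimedean) {q : ℚ} {x : X} (h : P.qLt q x) :
    ∃ r : ℚ, q < r ∧ P.qLt r x := by
  rw [P.qLt_def] at h
  unfold Rlt' at h
  obtain ⟨ρ, σ, hρσ, h1, h2⟩ := P.density hA h
  rw [P.ltQ_ofNat] at h1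
  refine ⟨(σ - ((-q.num).toNat : ℕ)) / q.den, ?_, P.qLt_unscale q.den_pos h2⟩
  have hq : q ≤ (q.num.toNat : ℚ) := le_nat_of_repr
  have h3 : (q.num.toNat : ℚ) < σ := lt_trans h1 hρσ
  have hden : (0:ℚ) < q.den := by exact_mod_cast q.den_pos
  rw [lt_div_iff₀ hden]
  have h4 : q * q.den = (q.num.toNat : ℚ) - ((-q.num).toNat : ℚ) := by
    rw [num_sub_eq]; exact Rat.mul_den_eq_num q
  rw [h4]
  linarith

lemma ltQ_refine (hA : P.Archimedean) {q : ℚ} {x : X} (h : P.ltQ x q) :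
    ∃ r : ℚ, r < q ∧ P.ltQ x r := by
  rw [P.ltQ_def] at h
  unfold Rgt' at h
  obtain ⟨ρ, σ, hρσ, h1, h2⟩ := P.density hA h
  rw [P.qLt_ofNat] at h2
  refine ⟨(ρ - ((-q.num).toNat : ℕ)) / q.den, ?_, P.ltQ_unscale q.den_pos h1⟩
  have h3 : ρ < (q.num.toNat : ℚ) := lt_trans hρσ h2
  have hden : (0:ℚ) < q.den := by exact_mod_cast q.den_pos
  rw [div_lt_iff₀ hden]
  have h4 : q * q.den = (q.num.toNat : ℚ) - ((-q.num).toNat : ℚ) := by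
    rw [num_sub_eq]; exact Rat.mul_den_eq_num q
  rw [h4]
  linarith
lemma grid_lower (hA : P.Archimedean) {x : X} {δ : ℚ} (hδ : 0 < δ) {s₁ : ℚ}
    (h₁ : P.qLt s₁ x) :
    ∃ s : ℚ, P.qLt s x ∧ ¬ P.qLt (s + δ) x ∧ s₁ ≤ s := by
  classical
  obtain ⟨N, hN⟩ := P.exists_upper hA x
  have hex : ∃ k : ℕ, ¬ P.qLt (s₁ + k * δ) x := by
    obtain ⟨k₁, hk₁⟩ := exists_nat_ge (((N : ℚ) - s₁) / δ)
    refine ⟨k₁, fun hk => ?_⟩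
    have h2 := P.qLt_between hk hN
    have h3 := (div_le_iff₀ hδ).1 hk₁
    linarith
  have hspec := Nat.find_spec hex
  have hk0pos : 0 < Nat.find hex := by
    rcases Nat.eq_zero_or_pos (Nat.find hex) with h0 | h0
    · exfalso
      rw [h0] at hspec
      norm_num at hspec
      exact hspec h₁
    · exact h0
  refine ⟨s₁ + ((Nat.find hex - 1 : ℕ) : ℚ) * δ, ?_, ?_, ?_⟩
  · by_contra hc
    exact Nat.find_min hex (m := Nat.find hex - 1) (by omega) hc
  · have e : s₁ + ((Nat.find hex - 1 : ℕ) : ℚ) * δ + δ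
        = s₁ + ((Nat.find hex : ℕ) : ℚ) * δ := by
      rw [Nat.cast_sub hk0pos]
      push_cast
      ring
    rw [e]
    exact hspec
  · nlinarith [Nat.cast_nonneg (α := ℚ) (Nat.find hex - 1)]

lemma grid_upper (hA : P.Archimedean) {x : X} {δ : ℚ} (hδ : 0 < δ) {t₁ : ℚ}
    (h₁ : P.ltQ x t₁) :
    ∃ s : ℚ, P.ltQ x s ∧ ¬ P.ltQ x (s - δ) ∧ s ≤ t₁ := by
  classical
  obtain ⟨m, hm⟩ := P.exists_lower hA x
  have hex : ∃ k : ℕ, ¬ P.ltQ x (t₁ - k * δ) := by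
    obtain ⟨k₁, hk₁⟩ := exists_nat_ge ((t₁ + m) / δ)
    refine ⟨k₁, fun hk => ?_⟩
    have h2 := P.qLt_between hm hk
    have h3 := (div_le_iff₀ hδ).1 hk₁
    linarith
  have hspec := Nat.find_spec hex
  have hk0pos : 0 < Nat.find hex := by
    rcases Nat.eq_zero_or_pos (Nat.find hex) with h0 | h0
    · exfalso
      rw [h0] at hspec
      norm_num at hspec
      exact hspec h₁
    · exact h0
  refine ⟨t₁ - ((Nat.find hex - 1 : ℕ) : ℚ) * δ, ?_, ?_, ?_⟩
  · by_contra hc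
    exact Nat.find_min hex (m := Nat.find hex - 1) (by omega) hc
  · have e : t₁ - ((Nat.find hex - 1 : ℕ) : ℚ) * δ - δ
        = t₁ - ((Nat.find hex : ℕ) : ℚ) * δ := by
      rw [Nat.cast_sub hk0pos]
      push_cast
      ring
    rw [e]
    exact hspec
  · nlinarith [Nat.cast_nonneg (α := ℚ) (Nat.find hex - 1)]

lemma ratRepr_add {q r : ℚ} {a b c a' b' c' : ℕ} (h1 : RatRepr q a b c)
    (h2 : RatRepr r a' b' c') :
    RatRepr (q + r) (c' * a + c * a') (c' * b + c * b') (c * c') := by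
  have hc := h1.1; have hc' := h2.1
  refine ratRepr_of_eq_div (by positivity) ?_
  rw [ratRepr_eq_div h1, ratRepr_eq_div h2]
  have e1 : (c : ℚ) ≠ 0 := by positivity
  have e2 : (c' : ℚ) ≠ 0 := by positivity
  push_cast
  field_simp
  ring

/-- Addition of strict lower rational bounds. -/
lemma rlt_add {a b c a' b' c' : ℕ} {x y : X} (hc : 0 < c) (hc' : 0 < c')
    (h1 : P.Rlt' a b c x) (h2 : P.Rlt' a' b' c' y) :
    P.Rlt' (c' * a + c * a') (c' * b + c * b') (c * c') (P.add x y) := by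
  rw [P.rlt_scale hc'] at h1
  rw [P.rlt_scale hc] at h2
  unfold Rlt' at h1 h2 ⊢
  have key := P.addLtAdd h1 h2
  rw [← P.ofNat_add] at key
  have e : P.add (P.add (P.nsmul (c' * c) x) (P.ofNat (c' * b)))
        (P.add (P.nsmul (c * c') y) (P.ofNat (c * b'))) =
      P.add (P.nsmul (c * c') (P.add x y)) (P.ofNat (c' * b + c * b')) := by
    rw [P.nsmul_addm, P.ofNat_add, Nat.mul_comm c' c]
    letI := P.acm; simp only [P.add_def, P.nsmul_def]; abel
  rwa [e] at key

/-- Addition of strict upper rational bounds. -/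
lemma rgt_add {a b c a' b' c' : ℕ} {x y : X} (hc : 0 < c) (hc' : 0 < c')
    (h1 : P.Rgt' a b c x) (h2 : P.Rgt' a' b' c' y) :
    P.Rgt' (c' * a + c * a') (c' * b + c * b') (c * c') (P.add x y) := by
  rw [P.rgt_scale hc'] at h1
  rw [P.rgt_scale hc] at h2
  unfold Rgt' at h1 h2 ⊢
  have key := P.addLtAdd h1 h2
  rw [← P.ofNat_add] at key
  have e : P.add (P.add (P.nsmul (c' * c) x) (P.ofNat (c' * b)))
        (P.add (P.nsmul (c * c') y) (P.ofNat (c * b'))) =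
      P.add (P.nsmul (c * c') (P.add x y)) (P.ofNat (c' * b + c * b')) := by
    rw [P.nsmul_addm, P.ofNat_add, Nat.mul_comm c' c]
    letI := P.acm; simp only [P.add_def, P.nsmul_def]; abel
  rwa [e] at key

lemma qLt_add {s t : ℚ} {x y : X} (h1 : P.qLt s x) (h2 : P.qLt t y) :
    P.qLt (s + t) (P.add x y) := by
  rw [P.qLt_def] at h1 h2
  rw [P.qLt_iff_repr (ratRepr_add (ratRepr_self s) (ratRepr_self t))]
  exact P.rlt_add s.den_pos t.den_pos h1 h2

lemma ltQ_add {s t : ℚ} {x y : X} (h1 : P.ltQ x s) (h2 : P.ltQ y t) :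
    P.ltQ (P.add x y) (s + t) := by
  rw [P.ltQ_def] at h1 h2
  rw [P.ltQ_iff_repr (ratRepr_add (ratRepr_self s) (ratRepr_self t))]
  exact P.rgt_add s.den_pos t.den_pos h1 h2
lemma rlt_add_upper {Ar Br cr A1 B1 c1 A2 B2 c2 : ℕ} {a b : X}
    (hcr : 0 < cr) (hc1 : 0 < c1) (hc2 : 0 < c2)
    (hr : P.Rlt' Ar Br cr (P.add a b)) (hs : ¬ P.Rlt' A1 B1 c1 a)
    (ht : ¬ P.Rlt' A2 B2 c2 b) :
    Ar * (c1 * c2) + (c2 * B1 + c1 * B2) * cr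
      < (c2 * A1 + c1 * A2) * cr + Br * (c1 * c2) := by
  rw [P.rlt_scale (k := c1 * c2) (by positivity)] at hr
  rw [P.rlt_scale (k := cr * c2) (by positivity)] at hs
  rw [P.rlt_scale (k := cr * c1) (by positivity)] at ht
  unfold Rlt' at hr hs ht
  have sum := P.addLeAdd hs ht
  rw [← P.ofNat_add] at sum
  have e1 : P.add (P.add (P.nsmul (cr * c2 * c1) a) (P.ofNat (cr * c2 * B1)))
      (P.add (P.nsmul (cr * c1 * c2) b) (P.ofNat (cr * c1 * B2))) =
      P.add (P.nsmul (cr * (c1 * c2)) (P.add a b))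
        (P.ofNat (cr * c2 * B1 + cr * c1 * B2)) := by
    rw [P.nsmul_addm, P.ofNat_add, show cr * c2 * c1 = cr * (c1 * c2) by ring,
      show cr * c1 * c2 = cr * (c1 * c2) by ring]
    letI := P.acm; simp only [P.add_def, P.nsmul_def]; abel
  rw [e1] at sum
  rw [show c1 * c2 * cr = cr * (c1 * c2) by ring] at hr
  have step := P.addLtAdd_of_lt_of_le hr sum
  have e3 : P.add (P.ofNat (c1 * c2 * Ar))
      (P.add (P.nsmul (cr * (c1 * c2)) (P.add a b))
        (P.ofNat (cr * c2 * B1 + cr * c1 * B2))) =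
      P.add (P.nsmul (cr * (c1 * c2)) (P.add a b))
        (P.ofNat (c1 * c2 * Ar + (cr * c2 * B1 + cr * c1 * B2))) := by
    rw [P.ofNat_add (c1 * c2 * Ar) (cr * c2 * B1 + cr * c1 * B2)]
    letI := P.acm; simp only [P.add_def, P.nsmul_def]; abel
  have e4 : P.add (P.add (P.nsmul (cr * (c1 * c2)) (P.add a b))
        (P.ofNat (c1 * c2 * Br))) (P.ofNat (cr * c2 * A1 + cr * c1 * A2)) =
      P.add (P.nsmul (cr * (c1 * c2)) (P.add a b))
        (P.ofNat (cr * c2 * A1 + cr * c1 * A2 + c1 * c2 * Br)) := by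
    rw [P.ofNat_add (cr * c2 * A1 + cr * c1 * A2) (c1 * c2 * Br)]
    letI := P.acm; simp only [P.add_def, P.nsmul_def]; abel
  rw [e3, e4] at step
  have hN := P.ofNat_lt_iff.1 ((P.add_lt_add_iff_left _ _ _).1 step)
  nlinarith [hN]

lemma rgt_add_lower {Ar Br cr A1 B1 c1 A2 B2 c2 : ℕ} {a b : X}
    (hcr : 0 < cr) (hc1 : 0 < c1) (hc2 : 0 < c2)
    (hr : P.Rgt' Ar Br cr (P.add a b)) (hs : ¬ P.Rgt' A1 B1 c1 a)
    (ht : ¬ P.Rgt' A2 B2 c2 b) :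
    (c2 * A1 + c1 * A2) * cr + Br * (c1 * c2)
      < Ar * (c1 * c2) + (c2 * B1 + c1 * B2) * cr := by
  rw [P.rgt_scale (k := c1 * c2) (by positivity)] at hr
  rw [P.rgt_scale (k := cr * c2) (by positivity)] at hs
  rw [P.rgt_scale (k := cr * c1) (by positivity)] at ht
  unfold Rgt' at hr hs ht
  have sum := P.addLeAdd hs ht
  rw [← P.ofNat_add] at sum
  have e1 : P.add (P.add (P.nsmul (cr * c2 * c1) a) (P.ofNat (cr * c2 * B1)))
      (P.add (P.nsmul (cr * c1 * c2) b) (P.ofNat (cr * c1 * B2))) =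
      P.add (P.nsmul (cr * (c1 * c2)) (P.add a b))
        (P.ofNat (cr * c2 * B1 + cr * c1 * B2)) := by
    rw [P.nsmul_addm, P.ofNat_add, show cr * c2 * c1 = cr * (c1 * c2) by ring,
      show cr * c1 * c2 = cr * (c1 * c2) by ring]
    letI := P.acm; simp only [P.add_def, P.nsmul_def]; abel
  rw [e1] at sum
  rw [show c1 * c2 * cr = cr * (c1 * c2) by ring] at hr
  -- sum : ¬ lt (CR(a+b) + Bsum) (ofNat Asum)
  -- hr : lt (CR(a+b) + c1c2Br) (ofNat (c1c2Ar))
  have le2 := P.addLeAdd sum (P.irrefl (P.ofNat (c1 * c2 * Br)))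
  have h2 := (P.add_lt_add_iff _ _ (P.ofNat (cr * c2 * B1 + cr * c1 * B2))).2 hr
  have e5 : P.add (P.add (P.nsmul (cr * (c1 * c2)) (P.add a b))
        (P.ofNat (c1 * c2 * Br))) (P.ofNat (cr * c2 * B1 + cr * c1 * B2)) =
      P.add (P.add (P.nsmul (cr * (c1 * c2)) (P.add a b))
        (P.ofNat (cr * c2 * B1 + cr * c1 * B2))) (P.ofNat (c1 * c2 * Br)) := by
    letI := P.acm; simp only [P.add_def, P.nsmul_def]; abel
  rw [e5] at h2
  have final := P.lt_of_le_of_lt le2 h2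
  rw [← P.ofNat_add, ← P.ofNat_add] at final
  have hN := P.ofNat_lt_iff.1 final
  nlinarith [hN]

lemma add_upper_bound {a b : X} {r s' t' : ℚ}
    (hr : P.qLt r (P.add a b)) (hs : ¬ P.qLt s' a) (ht : ¬ P.qLt t' b) :
    r < s' + t' := by
  rw [P.qLt_def] at hr
  rw [P.qLt_def] at hs
  rw [P.qLt_def] at ht
  rw [ratRepr_lt_iff (ratRepr_self r) (ratRepr_add (ratRepr_self s') (ratRepr_self t'))]
  exact P.rlt_add_upper r.den_pos s'.den_pos t'.den_pos hr hs ht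

lemma add_lower_bound {a b : X} {r s' t' : ℚ}
    (hr : P.ltQ (P.add a b) r) (hs : ¬ P.ltQ a s') (ht : ¬ P.ltQ b t') :
    s' + t' < r := by
  rw [P.ltQ_def] at hr
  rw [P.ltQ_def] at hs
  rw [P.ltQ_def] at ht
  rw [ratRepr_lt_iff (ratRepr_add (ratRepr_self s') (ratRepr_self t')) (ratRepr_self r)]
  exact P.rgt_add_lower r.den_pos s'.den_pos t'.den_pos hr hs ht
lemma add_lower_decomp (hA : P.Archimedean) {a b : X} {q : ℚ}
    (h : P.qLt q (P.add a b)) :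
    ∃ s t : ℚ, P.qLt s a ∧ P.qLt t b ∧ q ≤ s + t := by
  obtain ⟨r, hqr, hr⟩ := P.qLt_refine hA h
  obtain ⟨m1, hs1⟩ := P.exists_lower hA a
  obtain ⟨m2, ht1⟩ := P.exists_lower hA b
  have hδ : 0 < (r - q) / 2 := by linarith
  obtain ⟨s, hs, hsδ, -⟩ := P.grid_lower hA hδ hs1
  obtain ⟨t, ht, htδ, -⟩ := P.grid_lower hA hδ ht1
  have hb := P.add_upper_bound hr hsδ htδ
  exact ⟨s, t, hs, ht, by linarith⟩

lemma add_upper_decomp (hA : P.Archimedean) {a b : X} {q : ℚ}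
    (h : P.ltQ (P.add a b) q) :
    ∃ s t : ℚ, P.ltQ a s ∧ P.ltQ b t ∧ s + t ≤ q := by
  obtain ⟨r, hrq, hr⟩ := P.ltQ_refine hA h
  obtain ⟨n1, hs1⟩ := P.exists_upper hA a
  obtain ⟨n2, ht1⟩ := P.exists_upper hA b
  have hδ : 0 < (q - r) / 2 := by linarith
  obtain ⟨s, hs, hsδ, -⟩ := P.grid_upper hA hδ hs1
  obtain ⟨t, ht, htδ, -⟩ := P.grid_upper hA hδ ht1
  have hb := P.add_lower_bound hr hsδ htδ
  exact ⟨s, t, hs, ht, by linarith⟩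

lemma ratRepr_mul {q r : ℚ} {a b c a' b' c' : ℕ} (h1 : RatRepr q a b c)
    (h2 : RatRepr r a' b' c') :
    RatRepr (q * r) (a * a' + b * b') (a * b' + a' * b) (c * c') := by
  have hc := h1.1; have hc' := h2.1
  refine ratRepr_of_eq_div (by positivity) ?_
  rw [ratRepr_eq_div h1, ratRepr_eq_div h2]
  have e1 : (c : ℚ) ≠ 0 := by positivity
  have e2 : (c' : ℚ) ≠ 0 := by positivity
  push_cast
  field_simp
  ring

lemma toNat_lt_of_pos {q : ℚ} (h : 0 < q) : (-q.num).toNat < q.num.toNat := by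
  have := Rat.num_pos.2 h
  omega

lemma exists_pos_lower (hA : P.Archimedean) {a : X} (ha : P.lt P.zero a) :
    ∃ q : ℚ, 0 < q ∧ P.qLt q a := by
  obtain ⟨ρ, σ, hρσ, h1, h2⟩ := P.density hA ha
  exact ⟨σ, lt_trans (P.ltQ_zero_iff.1 h1) hρσ, h2⟩

/-- Strict positive lower bounds multiply. -/
lemma rlt_mul {A1 B1 c1 A2 B2 c2 : ℕ} {x y : X} (hc1 : 0 < c1) (hc2 : 0 < c2)
    (hD1 : B1 < A1) (hD2 : B2 < A2) (hx : P.lt P.zero x) (hy : P.lt P.zero y)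
    (h1 : P.Rlt' A1 B1 c1 x) (h2 : P.Rlt' A2 B2 c2 y) :
    P.Rlt' (A1 * A2 + B1 * B2) (A1 * B2 + A2 * B1) (c1 * c2) (P.mul x y) := by
  obtain ⟨D1, rfl⟩ : ∃ D, A1 = B1 + D := ⟨A1 - B1, by omega⟩
  obtain ⟨D2, rfl⟩ : ∃ D, A2 = B2 + D := ⟨A2 - B2, by omega⟩
  have hD1' : 0 < D1 := by omega
  have hD2' : 0 < D2 := by omega
  unfold Rlt' at h1 h2 ⊢
  -- extract ofNat D1 < c1 x
  rw [P.ofNat_add] at h1 h2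
  have g1 : P.lt (P.ofNat D1) (P.nsmul c1 x) := by
    have e : P.add (P.ofNat B1) (P.ofNat D1) = P.add (P.ofNat D1) (P.ofNat B1) :=
      P.add_comm _ _
    rw [e] at h1
    exact (P.add_lt_add_iff _ _ _).1 h1
  have g2 : P.lt (P.ofNat D2) (P.nsmul c2 y) := by
    have e : P.add (P.ofNat B2) (P.ofNat D2) = P.add (P.ofNat D2) (P.ofNat B2) :=
      P.add_comm _ _
    rw [e] at h2
    exact (P.add_lt_add_iff _ _ _).1 h2
  have pD1 : P.lt P.zero (P.ofNat D1) := P.nsmulPos hD1' P.zero_lt_one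
  have pD2 : P.lt P.zero (P.ofNat D2) := P.nsmulPos hD2' P.zero_lt_one
  have px : P.lt P.zero (P.nsmul c1 x) := P.nsmulPos hc1 hx
  have py : P.lt P.zero (P.nsmul c2 y) := P.nsmulPos hc2 hy
  -- multiply
  have m1 : P.lt (P.mul (P.ofNat D1) (P.ofNat D2)) (P.mul (P.nsmul c1 x) (P.ofNat D2)) :=
    (P.mul_lt_mul_iff _ _ _ pD1 px pD2).2 g1
  have m2 : P.lt (P.mul (P.ofNat D2) (P.nsmul c1 x)) (P.mul (P.nsmul c2 y) (P.nsmul c1 x)) :=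
    (P.mul_lt_mul_iff _ _ _ pD2 py px).2 g2
  rw [P.mul_comm _ _ pD2 px, P.mul_comm _ _ py px] at m2
  have m3 : P.lt (P.mul (P.ofNat D1) (P.ofNat D2)) (P.mul (P.nsmul c1 x) (P.nsmul c2 y)) :=
    P.ltTrans m1 m2
  rw [P.ofNat_mul_ofNat hD1' hD2', P.nsmul_mul_nsmul hc1 hc2 hx hy] at m3
  -- assemble
  have key := (P.add_lt_add_iff _ _ (P.ofNat ((B1 + D1) * B2 + (B2 + D2) * B1))).2 m3
  rw [← P.ofNat_add] at key
  have e2 : D1 * D2 + ((B1 + D1) * B2 + (B2 + D2) * B1)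
      = (B1 + D1) * (B2 + D2) + B1 * B2 := by ring
  rw [e2] at key
  exact key

/-- Strict positive upper bounds multiply. -/
lemma rgt_mul {A1 B1 c1 A2 B2 c2 : ℕ} {x y : X} (hc1 : 0 < c1) (hc2 : 0 < c2)
    (hx : P.lt P.zero x) (hy : P.lt P.zero y)
    (h1 : P.Rgt' A1 B1 c1 x) (h2 : P.Rgt' A2 B2 c2 y) :
    P.Rgt' (A1 * A2 + B1 * B2) (A1 * B2 + A2 * B1) (c1 * c2) (P.mul x y) := by
  have px : P.lt P.zero (P.nsmul c1 x) := P.nsmulPos hc1 hx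
  have py : P.lt P.zero (P.nsmul c2 y) := P.nsmulPos hc2 hy
  have hD1 : B1 < A1 := by
    have : P.lt (P.ofNat B1) (P.ofNat A1) := by
      refine P.ltTrans ?_ h1
      have := (P.add_lt_add_iff P.zero (P.nsmul c1 x) (P.ofNat B1)).2 px
      rwa [P.zero_add] at this
    exact P.ofNat_lt_iff.1 this
  have hD2 : B2 < A2 := by
    have : P.lt (P.ofNat B2) (P.ofNat A2) := by
      refine P.ltTrans ?_ h2
      have := (P.add_lt_add_iff P.zero (P.nsmul c2 y) (P.ofNat B2)).2 py
      rwa [P.zero_add] at this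
    exact P.ofNat_lt_iff.1 this
  obtain ⟨D1, rfl⟩ : ∃ D, A1 = B1 + D := ⟨A1 - B1, by omega⟩
  obtain ⟨D2, rfl⟩ : ∃ D, A2 = B2 + D := ⟨A2 - B2, by omega⟩
  have hD1' : 0 < D1 := by omega
  have hD2' : 0 < D2 := by omega
  unfold Rgt' at h1 h2 ⊢
  rw [P.ofNat_add] at h1 h2
  have g1 : P.lt (P.nsmul c1 x) (P.ofNat D1) := by
    have e : P.add (P.ofNat B1) (P.ofNat D1) = P.add (P.ofNat D1) (P.ofNat B1) :=
      P.add_comm _ _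
    rw [e] at h1
    exact (P.add_lt_add_iff _ _ _).1 h1
  have g2 : P.lt (P.nsmul c2 y) (P.ofNat D2) := by
    have e : P.add (P.ofNat B2) (P.ofNat D2) = P.add (P.ofNat D2) (P.ofNat B2) :=
      P.add_comm _ _
    rw [e] at h2
    exact (P.add_lt_add_iff _ _ _).1 h2
  have pD1 : P.lt P.zero (P.ofNat D1) := P.nsmulPos hD1' P.zero_lt_one
  have pD2 : P.lt P.zero (P.ofNat D2) := P.nsmulPos hD2' P.zero_lt_one
  have m1 : P.lt (P.mul (P.nsmul c1 x) (P.nsmul c2 y)) (P.mul (P.ofNat D1) (P.nsmul c2 y)) := by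
    have := (P.mul_lt_mul_iff _ _ _ px pD1 py).2 g1
    exact this
  have m2 : P.lt (P.mul (P.nsmul c2 y) (P.ofNat D1)) (P.mul (P.ofNat D2) (P.ofNat D1)) :=
    (P.mul_lt_mul_iff _ _ _ py pD2 pD1).2 g2
  rw [P.mul_comm _ _ py pD1] at m2
  have m3 := P.ltTrans m1 m2
  rw [P.mul_comm _ _ pD2 pD1] at m3
  rw [P.ofNat_mul_ofNat hD1' hD2', P.nsmul_mul_nsmul hc1 hc2 hx hy] at m3
  have key := (P.add_lt_add_iff _ _ (P.ofNat ((B1 + D1) * B2 + (B2 + D2) * B1))).2 m3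
  rw [← P.ofNat_add] at key
  have e2 : D1 * D2 + ((B1 + D1) * B2 + (B2 + D2) * B1)
      = (B1 + D1) * (B2 + D2) + B1 * B2 := by ring
  rw [e2] at key
  exact key

lemma qLt_mul {s t : ℚ} {x y : X} (hs : 0 < s) (ht : 0 < t)
    (h1 : P.qLt s x) (h2 : P.qLt t y) : P.qLt (s * t) (P.mul x y) := by
  have hx : P.lt P.zero x := P.qLt_zero_x.1 (P.qLt_mono hs.le h1)
  have hy : P.lt P.zero y := P.qLt_zero_x.1 (P.qLt_mono ht.le h2)
  rw [P.qLt_def] at h1 h2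
  rw [P.qLt_iff_repr (ratRepr_mul (ratRepr_self s) (ratRepr_self t))]
  exact P.rlt_mul s.den_pos t.den_pos (toNat_lt_of_pos hs) (toNat_lt_of_pos ht) hx hy h1 h2

lemma ltQ_mul {s t : ℚ} {x y : X} (hx : P.lt P.zero x) (hy : P.lt P.zero y)
    (h1 : P.ltQ x s) (h2 : P.ltQ y t) : P.ltQ (P.mul x y) (s * t) := by
  rw [P.ltQ_def] at h1 h2
  rw [P.ltQ_iff_repr (ratRepr_mul (ratRepr_self s) (ratRepr_self t))]
  exact P.rgt_mul s.den_pos t.den_pos hx hy h1 h2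
lemma rlt_mul_upper {Ar Br cr A1 B1 c1 A2 B2 c2 : ℕ} {a b : X}
    (hcr : 0 < cr) (hc1 : 0 < c1) (hc2 : 0 < c2) (hD1 : B1 < A1) (hD2 : B2 < A2)
    (ha : P.lt P.zero a) (hb : P.lt P.zero b)
    (hr : P.Rlt' Ar Br cr (P.mul a b)) (hs : ¬ P.Rlt' A1 B1 c1 a)
    (ht : ¬ P.Rlt' A2 B2 c2 b) :
    Ar * (c1 * c2) + (A1 * B2 + A2 * B1) * cr
      < (A1 * A2 + B1 * B2) * cr + Br * (c1 * c2) := by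
  obtain ⟨D1, rfl⟩ : ∃ D, A1 = B1 + D := ⟨A1 - B1, by omega⟩
  obtain ⟨D2, rfl⟩ : ∃ D, A2 = B2 + D := ⟨A2 - B2, by omega⟩
  have hD1' : 0 < D1 := by omega
  have hD2' : 0 < D2 := by omega
  unfold Rlt' at hr hs ht
  have le1 : ¬ P.lt (P.ofNat D1) (P.nsmul c1 a) := by
    intro hlt
    apply hs
    have h' := (P.add_lt_add_iff _ _ (P.ofNat B1)).2 hlt
    rwa [← P.ofNat_add, Nat.add_comm D1 B1] at h'
  have le2 : ¬ P.lt (P.ofNat D2) (P.nsmul c2 b) := by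
    intro hlt
    apply ht
    have h' := (P.add_lt_add_iff _ _ (P.ofNat B2)).2 hlt
    rwa [← P.ofNat_add, Nat.add_comm D2 B2] at h'
  have pD1 : P.lt P.zero (P.ofNat D1) := P.nsmulPos hD1' P.zero_lt_one
  have pD2 : P.lt P.zero (P.ofNat D2) := P.nsmulPos hD2' P.zero_lt_one
  have pa : P.lt P.zero (P.nsmul c1 a) := P.nsmulPos hc1 ha
  have pb : P.lt P.zero (P.nsmul c2 b) := P.nsmulPos hc2 hb
  have m1 : ¬ P.lt (P.mul (P.ofNat D1) (P.nsmul c2 b))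
      (P.mul (P.nsmul c1 a) (P.nsmul c2 b)) := P.mulLe pa pD1 pb le1
  have m2 : ¬ P.lt (P.mul (P.ofNat D2) (P.ofNat D1))
      (P.mul (P.nsmul c2 b) (P.ofNat D1)) := P.mulLe pb pD2 pD1 le2
  rw [P.mul_comm _ _ pD2 pD1, P.mul_comm _ _ pb pD1] at m2
  have mm := P.leTrans m1 m2
  rw [P.ofNat_mul_ofNat hD1' hD2', P.nsmul_mul_nsmul hc1 hc2 ha hb] at mm
  -- mm : (c1*c2)•(a*b) ≤ ofNat (D1*D2)
  have mms := (P.nsmul_le_iff (n := cr) hcr).2 mm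
  rw [P.nsmul_ofNat, ← P.nsmul_natmul] at mms
  have hrs : P.Rlt' (c1 * c2 * Ar) (c1 * c2 * Br) (c1 * c2 * cr) (P.mul a b) :=
    (P.rlt_scale (by positivity : 0 < c1 * c2)).1 hr
  unfold Rlt' at hrs
  rw [show c1 * c2 * cr = cr * (c1 * c2) by ring] at hrs
  have le3 := P.addLeAdd mms (P.irrefl (P.ofNat (c1 * c2 * Br)))
  have final := P.lt_of_lt_of_le hrs le3
  rw [← P.ofNat_add] at final
  have hN := P.ofNat_lt_iff.1 final
  nlinarith [hN]

lemma rgt_mul_lower {Ar Br cr A1 B1 c1 A2 B2 c2 : ℕ} {a b : X}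
    (hcr : 0 < cr) (hc1 : 0 < c1) (hc2 : 0 < c2) (hD1 : B1 < A1) (hD2 : B2 < A2)
    (ha : P.lt P.zero a) (hb : P.lt P.zero b)
    (hr : P.Rgt' Ar Br cr (P.mul a b)) (hs : ¬ P.Rgt' A1 B1 c1 a)
    (ht : ¬ P.Rgt' A2 B2 c2 b) :
    (A1 * A2 + B1 * B2) * cr + Br * (c1 * c2)
      < Ar * (c1 * c2) + (A1 * B2 + A2 * B1) * cr := by
  obtain ⟨D1, rfl⟩ : ∃ D, A1 = B1 + D := ⟨A1 - B1, by omega⟩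
  obtain ⟨D2, rfl⟩ : ∃ D, A2 = B2 + D := ⟨A2 - B2, by omega⟩
  have hD1' : 0 < D1 := by omega
  have hD2' : 0 < D2 := by omega
  unfold Rgt' at hr hs ht
  have le1 : ¬ P.lt (P.nsmul c1 a) (P.ofNat D1) := by
    intro hlt
    apply hs
    have h' := (P.add_lt_add_iff _ _ (P.ofNat B1)).2 hlt
    rwa [← P.ofNat_add, Nat.add_comm D1 B1] at h'
  have le2 : ¬ P.lt (P.nsmul c2 b) (P.ofNat D2) := by
    intro hlt
    apply ht
    have h' := (P.add_lt_add_iff _ _ (P.ofNat B2)).2 hlt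
    rwa [← P.ofNat_add, Nat.add_comm D2 B2] at h'
  have pD1 : P.lt P.zero (P.ofNat D1) := P.nsmulPos hD1' P.zero_lt_one
  have pD2 : P.lt P.zero (P.ofNat D2) := P.nsmulPos hD2' P.zero_lt_one
  have pa : P.lt P.zero (P.nsmul c1 a) := P.nsmulPos hc1 ha
  have pb : P.lt P.zero (P.nsmul c2 b) := P.nsmulPos hc2 hb
  have m1 : ¬ P.lt (P.mul (P.nsmul c1 a) (P.nsmul c2 b))
      (P.mul (P.ofNat D1) (P.nsmul c2 b)) := P.mulLe pD1 pa pb le1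
  have m2 : ¬ P.lt (P.mul (P.nsmul c2 b) (P.ofNat D1))
      (P.mul (P.ofNat D2) (P.ofNat D1)) := P.mulLe pD2 pb pD1 le2
  rw [P.mul_comm _ _ pD2 pD1, P.mul_comm _ _ pb pD1] at m2
  have mm := P.leTrans m2 m1
  rw [P.ofNat_mul_ofNat hD1' hD2', P.nsmul_mul_nsmul hc1 hc2 ha hb] at mm
  -- mm : ofNat (D1*D2) ≤ (c1*c2)•(a*b)
  have mms := (P.nsmul_le_iff (n := cr) hcr).2 mm
  rw [P.nsmul_ofNat, ← P.nsmul_natmul] at mms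
  have hrs : P.Rgt' (c1 * c2 * Ar) (c1 * c2 * Br) (c1 * c2 * cr) (P.mul a b) :=
    (P.rgt_scale (by positivity : 0 < c1 * c2)).1 hr
  unfold Rgt' at hrs
  rw [show c1 * c2 * cr = cr * (c1 * c2) by ring] at hrs
  have le3 := P.addLeAdd mms (P.irrefl (P.ofNat (c1 * c2 * Br)))
  have final := P.lt_of_le_of_lt le3 hrs
  rw [← P.ofNat_add] at final
  have hN := P.ofNat_lt_iff.1 final
  nlinarith [hN]

lemma mul_upper_bound {a b : X} {r s' t' : ℚ} (hs0 : 0 < s') (ht0 : 0 < t')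
    (ha : P.lt P.zero a) (hb : P.lt P.zero b)
    (hr : P.qLt r (P.mul a b)) (hs : ¬ P.qLt s' a) (ht : ¬ P.qLt t' b) :
    r < s' * t' := by
  rw [P.qLt_def] at hr
  rw [P.qLt_def] at hs
  rw [P.qLt_def] at ht
  rw [ratRepr_lt_iff (ratRepr_self r) (ratRepr_mul (ratRepr_self s') (ratRepr_self t'))]
  have := P.rlt_mul_upper r.den_pos s'.den_pos t'.den_pos
    (toNat_lt_of_pos hs0) (toNat_lt_of_pos ht0) ha hb hr hs ht
  nlinarith [this]

lemma mul_lower_bound {a b : X} {r s' t' : ℚ} (hs0 : 0 < s') (ht0 : 0 < t')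
    (ha : P.lt P.zero a) (hb : P.lt P.zero b)
    (hr : P.ltQ (P.mul a b) r) (hs : ¬ P.ltQ a s') (ht : ¬ P.ltQ b t') :
    s' * t' < r := by
  rw [P.ltQ_def] at hr
  rw [P.ltQ_def] at hs
  rw [P.ltQ_def] at ht
  rw [ratRepr_lt_iff (ratRepr_mul (ratRepr_self s') (ratRepr_self t')) (ratRepr_self r)]
  have := P.rgt_mul_lower r.den_pos s'.den_pos t'.den_pos
    (toNat_lt_of_pos hs0) (toNat_lt_of_pos ht0) ha hb hr hs ht
  nlinarith [this]
lemma mul_lower_decomp (hA : P.Archimedean) {a b : X} (ha : P.lt P.zero a)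
    (hb : P.lt P.zero b) {q : ℚ} (h : P.qLt q (P.mul a b)) :
    ∃ s t : ℚ, 0 < s ∧ 0 < t ∧ P.qLt s a ∧ P.qLt t b ∧ q ≤ s * t := by
  obtain ⟨r, hqr, hr⟩ := P.qLt_refine hA h
  obtain ⟨s₁, hs₁pos, hs₁⟩ := P.exists_pos_lower hA ha
  obtain ⟨t₁, ht₁pos, ht₁⟩ := P.exists_pos_lower hA hb
  obtain ⟨SA, hSA⟩ := P.exists_upper hA a
  obtain ⟨SB, hSB⟩ := P.exists_upper hA b
  obtain ⟨E, hE⟩ : ∃ E : ℚ, E = (SA : ℚ) + SB + 1 := ⟨_, rfl⟩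
  have hE0 : 0 < E := by rw [hE]; positivity
  obtain ⟨δ, hδdef⟩ : ∃ δ : ℚ, δ = min ((r - q) / E) 1 := ⟨_, rfl⟩
  have hδ : 0 < δ := by
    rw [hδdef]
    apply lt_min _ one_pos
    apply div_pos (by linarith) hE0
  obtain ⟨s, hs, hsδ, hss₁⟩ := P.grid_lower hA hδ hs₁
  obtain ⟨t, ht, htδ, htt₁⟩ := P.grid_lower hA hδ ht₁
  have hspos : 0 < s := hs₁pos.trans_le hss₁
  have htpos : 0 < t := ht₁pos.trans_le htt₁
  have hub := P.mul_upper_bound (by linarith : 0 < s + δ) (by linarith : 0 < t + δ)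
    ha hb hr hsδ htδ
  have hsSA : s < SA := P.qLt_between hs hSA
  have htSB : t < SB := P.qLt_between ht hSB
  have hδE : δ * E ≤ r - q := by
    have h1 : δ ≤ (r - q) / E := by rw [hδdef]; exact min_le_left _ _
    have h2 : δ * E ≤ ((r - q) / E) * E := by nlinarith
    have h3 : ((r - q) / E) * E = r - q := by field_simp
    linarith
  have hδ1 : δ ≤ 1 := by rw [hδdef]; exact min_le_right _ _
  rw [hE] at hδE
  refine ⟨s, t, hspos, htpos, hs, ht, ?_⟩
  nlinarith [hub, hδE, mul_le_mul_of_nonneg_left hsSA.le hδ.le,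
    mul_le_mul_of_nonneg_left htSB.le hδ.le,
    mul_le_mul_of_nonneg_left hδ1 hδ.le]

lemma mul_upper_decomp (hA : P.Archimedean) {a b : X} (ha : P.lt P.zero a)
    (hb : P.lt P.zero b) {q : ℚ} (h : P.ltQ (P.mul a b) q) :
    ∃ s t : ℚ, 0 < s ∧ 0 < t ∧ P.ltQ a s ∧ P.ltQ b t ∧ s * t ≤ q := by
  obtain ⟨r, hrq, hr⟩ := P.ltQ_refine hA h
  obtain ⟨qa, hqa, hqal⟩ := P.exists_pos_lower hA ha
  obtain ⟨qb, hqb, hqbl⟩ := P.exists_pos_lower hA hb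
  obtain ⟨SA, hSA⟩ := P.exists_upper hA a
  obtain ⟨SB, hSB⟩ := P.exists_upper hA b
  obtain ⟨E, hE⟩ : ∃ E : ℚ, E = (SA : ℚ) + SB + 1 := ⟨_, rfl⟩
  have hE0 : 0 < E := by rw [hE]; positivity
  obtain ⟨δ, hδdef⟩ : ∃ δ : ℚ, δ = min (min ((q - r) / E) (qa / 2)) (qb / 2) := ⟨_, rfl⟩
  have hδ : 0 < δ := by
    rw [hδdef]
    have hqr' : 0 < (q - r) / E := div_pos (by linarith) hE0
    simp only [lt_min_iff]
    exact ⟨⟨hqr', by linarith⟩, by linarith⟩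
  have hδqa : δ ≤ qa / 2 := by
    rw [hδdef]; exact le_trans (min_le_left _ _) (min_le_right _ _)
  have hδqb : δ ≤ qb / 2 := by rw [hδdef]; exact min_le_right _ _
  have hδE : δ * E ≤ q - r := by
    have h1 : δ ≤ (q - r) / E := by
      rw [hδdef]; exact le_trans (min_le_left _ _) (min_le_left _ _)
    have h2 : δ * E ≤ ((q - r) / E) * E := by nlinarith
    have h3 : ((q - r) / E) * E = q - r := by field_simp
    linarith
  obtain ⟨s, hs, hsδ, hsSA⟩ := P.grid_upper hA hδ hSA
  obtain ⟨t, ht, htδ, htSB⟩ := P.grid_upper hA hδ hSB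
  have hqas : qa < s := P.qLt_between hqal hs
  have hqbt : qb < t := P.qLt_between hqbl ht
  have hs0 : 0 < s - δ := by linarith
  have ht0 : 0 < t - δ := by linarith
  have hlb := P.mul_lower_bound hs0 ht0 ha hb hr hsδ htδ
  rw [hE] at hδE
  refine ⟨s, t, by linarith, by linarith, hs, ht, ?_⟩
  nlinarith [hlb, hδE, mul_le_mul_of_nonneg_left hsSA hδ.le,
    mul_le_mul_of_nonneg_left htSB hδ.le, _root_.mul_pos hδ hδ]
end Prestreak

/-- (1) There is at most one map from a prestreak to a streak preserving
comparison with rationals on both sides; (2) if the domain is archimedean,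
such a map is automatically a prestreak morphism. -/
theorem preservation_of_rationals_implies_morphism {X Y : Type*}
    (P : Prestreak X) (Q : Prestreak Y) (hQA : Q.Archimedean) (hQT : Q.Tight) :
    (∀ f g : X → Y,
      (∀ (q : ℚ) (a : X), P.qLt q a → Q.qLt q (f a)) →
      (∀ (q : ℚ) (a : X), P.ltQ a q → Q.ltQ (f a) q) →
      (∀ (q : ℚ) (a : X), P.qLt q a → Q.qLt q (g a)) →
      (∀ (q : ℚ) (a : X), P.ltQ a q → Q.ltQ (g a) q) →
      f = g) ∧
    (P.Archimedean → ∀ f : X → Y,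
      (∀ (q : ℚ) (a : X), P.qLt q a → Q.qLt q (f a)) →
      (∀ (q : ℚ) (a : X), P.ltQ a q → Q.ltQ (f a) q) →
      P.IsHom Q f) := by
  
  constructor
  · intro f g hf1 hf2 hg1 hg2
    funext a
    exact Prestreak.eq_of_cuts P Q hQA hQT f hf1 hf2 a (g a)
      (fun q h => hg1 q a h) (fun q h => hg2 q a h)
  · intro hPA f hf1 hf2
    have hlt : ∀ a b, P.lt a b → Q.lt (f a) (f b) := by
      intro a b hab
      obtain ⟨q, r, hqr, h1, h2⟩ := P.density hPA hab
      exact Q.lt_of_ltQ_qLt (hf2 q a h1) (hf1 q b (P.qLt_mono hqr.le h2))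
    have hzero : f P.zero = Q.zero :=
      Prestreak.eq_of_cuts P Q hQA hQT f hf1 hf2 P.zero Q.zero
        (fun q h => Q.qLt_zero_iff.2 (P.qLt_zero_iff.1 h))
        (fun q h => Q.ltQ_zero_iff.2 (P.ltQ_zero_iff.1 h))
    have hone : f P.one = Q.one :=
      Prestreak.eq_of_cuts P Q hQA hQT f hf1 hf2 P.one Q.one
        (fun q h => Q.qLt_one_iff.2 (P.qLt_one_iff.1 h))
        (fun q h => Q.ltQ_one_iff.2 (P.ltQ_one_iff.1 h))
    have hadd : ∀ a b, f (P.add a b) = Q.add (f a) (f b) := by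
      intro a b
      refine Prestreak.eq_of_cuts P Q hQA hQT f hf1 hf2 _ _ ?_ ?_
      · intro q h
        obtain ⟨s, t, hs, ht, hle⟩ := P.add_lower_decomp hPA h
        exact Q.qLt_mono hle (Q.qLt_add (hf1 s a hs) (hf1 t b ht))
      · intro q h
        obtain ⟨s, t, hs, ht, hle⟩ := P.add_upper_decomp hPA h
        exact Q.ltQ_mono hle (Q.ltQ_add (hf2 s a hs) (hf2 t b ht))
    have hmul : ∀ a b, P.lt P.zero a → P.lt P.zero b →
        f (P.mul a b) = Q.mul (f a) (f b) := by
      intro a b ha hb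
      have hfa : Q.lt Q.zero (f a) := by
        obtain ⟨s, hspos, hs⟩ := P.exists_pos_lower hPA ha
        exact Q.qLt_zero_x.1 (Q.qLt_mono hspos.le (hf1 s a hs))
      have hfb : Q.lt Q.zero (f b) := by
        obtain ⟨s, hspos, hs⟩ := P.exists_pos_lower hPA hb
        exact Q.qLt_zero_x.1 (Q.qLt_mono hspos.le (hf1 s b hs))
      refine Prestreak.eq_of_cuts P Q hQA hQT f hf1 hf2 _ _ ?_ ?_
      · intro q h
        obtain ⟨s, t, hs0, ht0, hs, ht, hle⟩ := P.mul_lower_decomp hPA ha hb h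
        exact Q.qLt_mono hle (Q.qLt_mul hs0 ht0 (hf1 s a hs) (hf1 t b ht))
      · intro q h
        obtain ⟨s, t, hs0, ht0, hs, ht, hle⟩ := P.mul_upper_decomp hPA ha hb h
        exact Q.ltQ_mono hle (Q.ltQ_mul hfa hfb (hf2 s a hs) (hf2 t b ht))
    exact ⟨hlt, hadd, hzero, hone, hmul⟩
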